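/- For natural numbers a, b ≥ 2, the classical multiple zeta values satisfy Euler's decomposition formula: ζ(a)·ζ(b) = \sum_{i=0}^{a−1} binom(i+b−1, b−1) ζ(b+i, a−i) + \sum_{j=0}^{b−1} binom(j+a−1, a−1) ζ(a+j, b−j). -/

import Mathlib

set_option maxHeartbeats 800000

/-- Riemann zeta value `ζ(n) = ∑_{m>0} 1/mⁿ`. -/
noncomputable def zeta1 (n : ℕ) : ℝ := ∑' m : ℕ, 1 / ((m : ℝ) + 1) ^ n

/-- Double zeta value `ζ(a,b) = ∑_{m₁>m₂>0} 1/(m₁ᵃ m₂ᵇ)`; for `b = 0` this is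
interpreted as `∑_{m₁>m₂>0} 1/m₁ᵃ`. -/
noncomputable def zeta2 (a b : ℕ) : ℝ :=
  ∑' p : ℕ × ℕ, if p.2 < p.1 ∧ 0 < p.2 then 1 / ((p.1 : ℝ) ^ a * (p.2 : ℝ) ^ b) else 0


noncomputable def eulerS (a b : ℕ) (x y : ℝ) : ℝ :=
  ∑ i ∈ Finset.range (a + 1), (Nat.choose (i + b) b : ℝ) / ((x + y) ^ (b + 1 + i) * x ^ (a + 1 - i))

lemma eulerS_key (a b : ℕ) (x y : ℝ) (hxy : x + y ≠ 0) :
    eulerS (a + 1) (b + 1) x y = 1 / (x + y) * (eulerS (a + 1) b x y + eulerS a (b + 1) x y) := by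
  unfold eulerS
  rw [mul_add, Finset.mul_sum, Finset.mul_sum]
  have h1 : ∀ i ∈ Finset.range (a + 2),
      (Nat.choose (i + (b+1)) (b+1) : ℝ) / ((x + y) ^ (b + 1 + 1 + i) * x ^ (a + 1 + 1 - i))
      = (Nat.choose (i + b) b : ℝ) / ((x + y) ^ (b + 1 + 1 + i) * x ^ (a + 1 + 1 - i))
        + (Nat.choose (i + b) (b+1) : ℝ) / ((x + y) ^ (b + 1 + 1 + i) * x ^ (a + 1 + 1 - i)) := by
    intro i _
    rw [← add_div]
    congr 1
    have : i + (b + 1) = (i + b) + 1 := by omega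
    rw [this, Nat.choose_succ_succ (i + b) b]
    push_cast; ring
  rw [Finset.sum_congr rfl h1, Finset.sum_add_distrib]
  congr 1
  · apply Finset.sum_congr rfl
    intro i _
    have he : b + 1 + 1 + i = (b + 1 + i) + 1 := by omega
    rw [he, pow_succ]
    field_simp
  · rw [Finset.sum_range_succ' _ (a + 1)]
    have h0 : (Nat.choose (0 + b) (b+1) : ℝ) = 0 := by
      simp [Nat.choose_eq_zero_of_lt]
    rw [h0, zero_div, add_zero]
    apply Finset.sum_congr rfl
    intro i _
    have he : b + 1 + 1 + (i + 1) = (b + 1 + 1 + i) + 1 := by omega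
    have he2 : a + 1 + 1 - (i + 1) = a + 1 - i := by omega
    have he3 : i + 1 + b = i + (b + 1) := by omega
    rw [he, he2, he3, pow_succ]
    field_simp

lemma eulerS_zero_right (b : ℕ) (x y : ℝ) (hx : x ≠ 0) (hxy : x + y ≠ 0) :
    eulerS (b + 1) 0 x y = 1 / (x + y) * (eulerS b 0 x y + 1 / x ^ (b + 2)) := by
  unfold eulerS
  rw [mul_add, Finset.mul_sum, Finset.sum_range_succ' _ (b + 1)]
  simp only [Nat.choose_zero_right, Nat.cast_one]
  congr 1
  · apply Finset.sum_congr rfl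
    intro i _
    have he : 0 + 1 + (i + 1) = (0 + 1 + i) + 1 := by omega
    have he2 : b + 1 + 1 - (i + 1) = b + 1 - i := by omega
    rw [he, he2, pow_succ]
    field_simp
  · have : b + 1 + 1 - 0 = b + 2 := by omega
    rw [this]
    field_simp
    ring

lemma eulerS_zero_left (b : ℕ) (x y : ℝ) (hxy : x + y ≠ 0) :
    eulerS 0 (b + 1) x y = 1 / (x + y) * eulerS 0 b x y := by
  unfold eulerS
  simp only [Finset.sum_range_one, Nat.choose_self, Nat.cast_one, zero_add]
  have he : b + 1 + 1 + 0 = (b + 1 + 0) + 1 := by omega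
  rw [he, pow_succ]
  field_simp

lemma euler_pf : ∀ (n a b : ℕ), a + b = n → ∀ x y : ℝ, 0 < x → 0 < y →
    1 / (x ^ (a + 1) * y ^ (b + 1)) = eulerS a b x y + eulerS b a y x := by
  intro n
  induction n using Nat.strong_induction_on with
  | _ n ih =>
    intro a b hab x y hx hy
    have hxy : (0:ℝ) < x + y := by linarith
    have hxy' : x + y ≠ 0 := ne_of_gt hxy
    have hx' : x ≠ 0 := ne_of_gt hx
    have hy' : y ≠ 0 := ne_of_gt hy
    match a, b with
    | 0, 0 =>
      show 1 / (x ^ 1 * y ^ 1) = (∑ i ∈ Finset.range 1, _) + (∑ i ∈ Finset.range 1, _)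
      rw [Finset.sum_range_one, Finset.sum_range_one]
      norm_num
      field_simp
      ring
    | 0, b + 1 =>
      have IH := ih b (by omega) 0 b (by omega) x y hx hy
      have step : 1 / (x ^ (0+1) * y ^ (b + 1 + 1))
          = 1 / (x + y) * (1 / (x ^ (0+1) * y ^ (b + 1)) + 1 / y ^ (b + 2)) := by
        field_simp
        ring
      rw [step, IH, eulerS_zero_left b x y hxy',
        eulerS_zero_right b y x hy' (by rw [add_comm]; exact hxy')]
      ring
    | a + 1, 0 =>
      have IH := ih a (by omega) a 0 (by omega) x y hx hy
      have step : 1 / (x ^ (a + 1 + 1) * y ^ (0+1))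
          = 1 / (x + y) * (1 / (x ^ (a + 1) * y ^ (0+1)) + 1 / x ^ (a + 2)) := by
        field_simp
        ring
      rw [step, IH, eulerS_zero_left a y x (by rw [add_comm]; exact hxy'),
        eulerS_zero_right a x y hx' hxy']
      ring
    | a + 1, b + 1 =>
      have IH1 := ih (a + 1 + b) (by omega) (a+1) b rfl x y hx hy
      have IH2 := ih (a + (b+1)) (by omega) a (b+1) rfl x y hx hy
      have step : 1 / (x ^ (a + 1 + 1) * y ^ (b + 1 + 1))
          = 1 / (x + y) * (1 / (x ^ (a + 1 + 1) * y ^ (b + 1)) + 1 / (x ^ (a + 1) * y ^ (b + 1 + 1))) := by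
        field_simp
        ring
      rw [step, IH1, IH2, eulerS_key a b x y hxy',
        eulerS_key b a y x (by rw [add_comm]; exact hxy')]
      ring

lemma zetaAux1 (s t : ℕ) :
    zeta2 s t = ∑' p : ℕ × ℕ, 1 / (((p.1 : ℝ) + (p.2 : ℝ) + 2) ^ s * ((p.1 : ℝ) + 1) ^ t) := by
  unfold zeta2
  set f : ℕ × ℕ → ℝ := fun q => if q.2 < q.1 ∧ 0 < q.2 then 1 / ((q.1 : ℝ) ^ s * (q.2 : ℝ) ^ t) else 0 with hf
  set g : ℕ × ℕ → ℕ × ℕ := fun p => (p.1 + p.2 + 2, p.1 + 1) with hg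
  have hinj : Function.Injective g := by
    intro p q h
    simp only [hg, Prod.mk.injEq] at h
    obtain ⟨h1, h2⟩ := h
    exact Prod.ext (by omega) (by omega)
  have hsupp : Function.support f ⊆ Set.range g := by
    intro q hq
    simp only [Function.mem_support, hf] at hq
    by_cases hc : q.2 < q.1 ∧ 0 < q.2
    · exact ⟨(q.2 - 1, q.1 - q.2 - 1), Prod.ext (by simp [hg]; omega) (by simp [hg]; omega)⟩
    · simp [hc] at hq
  rw [← hinj.tsum_eq hsupp]
  apply tsum_congr
  intro p
  have hc : (g p).2 < (g p).1 ∧ 0 < (g p).2 := by simp [hg]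
  simp only [hf, hc, if_true, hg]
  push_cast
  ring_nf
  simp
  intro h
  exfalso
  omega

lemma zetaAux2 (s t : ℕ) :
    zeta2 s t = ∑' p : ℕ × ℕ, 1 / (((p.1 : ℝ) + (p.2 : ℝ) + 2) ^ s * ((p.2 : ℝ) + 1) ^ t) := by
  rw [zetaAux1, ← (Equiv.prodComm ℕ ℕ).tsum_eq]
  apply tsum_congr
  intro p
  simp only [Equiv.prodComm_apply, Prod.fst_swap, Prod.snd_swap]
  ring_nf

lemma summable_zeta1 {n : ℕ} (hn : 1 < n) : Summable (fun m : ℕ => 1 / ((m : ℝ) + 1) ^ n) := by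
  have h := Real.summable_one_div_nat_pow.mpr hn
  have := (summable_nat_add_iff 1).mpr h
  exact this.congr (by intro m; push_cast; ring_nf)

/-- Euler's decomposition formula for classical double zeta values. -/
theorem euler_decomposition (a b : ℕ) (ha : 2 ≤ a) (hb : 2 ≤ b) :
    zeta1 a * zeta1 b =
      (∑ i ∈ Finset.range a, (Nat.choose (i + b - 1) (b - 1) : ℝ) * zeta2 (b + i) (a - i))
        + ∑ j ∈ Finset.range b, (Nat.choose (j + a - 1) (a - 1) : ℝ) * zeta2 (a + j) (b - j) := by
  obtain ⟨a1, rfl⟩ : ∃ n, a = n + 1 := ⟨a - 1, by omega⟩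
  obtain ⟨b1, rfl⟩ : ∃ n, b = n + 1 := ⟨b - 1, by omega⟩
  set A := a1 + 1 with hA
  set B := b1 + 1 with hB
  -- basic positivity helpers
  have hxpos : ∀ m : ℕ, (0:ℝ) < (m:ℝ) + 1 := fun m => by positivity
  -- summability of factors
  have sA : Summable (fun m : ℕ => 1 / ((m : ℝ) + 1) ^ A) := summable_zeta1 (by omega)
  have sB : Summable (fun m : ℕ => 1 / ((m : ℝ) + 1) ^ B) := summable_zeta1 (by omega)
  set F : ℕ × ℕ → ℝ := fun p => 1 / ((((p.1:ℝ) + 1) ^ A) * (((p.2:ℝ) + 1) ^ B)) with hFdef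
  have hFmul : ∀ p : ℕ × ℕ,
      (1 / ((p.1:ℝ) + 1) ^ A) * (1 / ((p.2:ℝ) + 1) ^ B) = F p := fun p => by
    rw [hFdef]; rw [div_mul_div_comm, one_mul]
  have hFsum : Summable F := by
    refine (sA.mul_of_nonneg sB (fun m => by positivity) (fun m => by positivity)).congr ?_
    intro p; exact hFmul p
  -- the pointwise terms
  set ft : ℕ → ℕ × ℕ → ℝ := fun i p =>
    (Nat.choose (i + b1) b1 : ℝ) *
      (1 / ((((p.1:ℝ) + (p.2:ℝ) + 2) ^ (B + i)) * (((p.1:ℝ) + 1) ^ (A - i)))) with hft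
  set gt : ℕ → ℕ × ℕ → ℝ := fun j p =>
    (Nat.choose (j + a1) a1 : ℝ) *
      (1 / ((((p.1:ℝ) + (p.2:ℝ) + 2) ^ (A + j)) * (((p.2:ℝ) + 1) ^ (B - j)))) with hgt
  have hft_nonneg : ∀ i p, 0 ≤ ft i p := fun i p => by
    rw [hft]; positivity
  have hgt_nonneg : ∀ j p, 0 ≤ gt j p := fun j p => by
    rw [hgt]; positivity
  -- pointwise decomposition
  have hpt : ∀ p : ℕ × ℕ, F p =
      (∑ i ∈ Finset.range A, ft i p) + ∑ j ∈ Finset.range B, gt j p := by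
    intro p
    have key := euler_pf (a1 + b1) a1 b1 rfl ((p.1:ℝ) + 1) ((p.2:ℝ) + 1) (hxpos p.1) (hxpos p.2)
    have hxy : ((p.1:ℝ) + 1) + ((p.2:ℝ) + 1) = (p.1:ℝ) + (p.2:ℝ) + 2 := by ring
    have e1 : eulerS a1 b1 ((p.1:ℝ) + 1) ((p.2:ℝ) + 1) = ∑ i ∈ Finset.range A, ft i p := by
      unfold eulerS
      apply Finset.sum_congr rfl
      intro i _
      rw [hxy]
      simp only [hft, mul_one_div]
      rfl
    have e2 : eulerS b1 a1 ((p.2:ℝ) + 1) ((p.1:ℝ) + 1) = ∑ j ∈ Finset.range B, gt j p := by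
      unfold eulerS
      apply Finset.sum_congr rfl
      intro j _
      have hxy' : ((p.2:ℝ) + 1) + ((p.1:ℝ) + 1) = (p.1:ℝ) + (p.2:ℝ) + 2 := by ring
      rw [hxy']
      simp only [hgt, mul_one_div]
      rfl
    rw [hFdef]
    simpa [e1, e2] using key
  -- each term is bounded by F, hence summable
  have hft_le : ∀ i ∈ Finset.range A, ∀ p, ft i p ≤ F p := by
    intro i hi p
    rw [hpt p]
    have h1 : ft i p ≤ ∑ i ∈ Finset.range A, ft i p :=
      Finset.single_le_sum (fun k _ => hft_nonneg k p) hi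
    have h2 : (0:ℝ) ≤ ∑ j ∈ Finset.range B, gt j p :=
      Finset.sum_nonneg (fun k _ => hgt_nonneg k p)
    linarith
  have hgt_le : ∀ j ∈ Finset.range B, ∀ p, gt j p ≤ F p := by
    intro j hj p
    rw [hpt p]
    have h1 : gt j p ≤ ∑ j ∈ Finset.range B, gt j p :=
      Finset.single_le_sum (fun k _ => hgt_nonneg k p) hj
    have h2 : (0:ℝ) ≤ ∑ i ∈ Finset.range A, ft i p :=
      Finset.sum_nonneg (fun k _ => hft_nonneg k p)
    linarith
  have hft_sum : ∀ i ∈ Finset.range A, Summable (ft i) := fun i hi =>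
    Summable.of_nonneg_of_le (hft_nonneg i) (hft_le i hi) hFsum
  have hgt_sum : ∀ j ∈ Finset.range B, Summable (gt j) := fun j hj =>
    Summable.of_nonneg_of_le (hgt_nonneg j) (hgt_le j hj) hFsum
  -- main computation
  have step1 : zeta1 A * zeta1 B = ∑' p : ℕ × ℕ, F p := by
    unfold zeta1
    rw [Summable.tsum_mul_tsum sA sB (by
      refine (sA.mul_of_nonneg sB (fun m => by positivity) (fun m => by positivity)))]
    exact tsum_congr hFmul
  rw [step1]
  calc ∑' p, F p
      = ∑' p, ((∑ i ∈ Finset.range A, ft i p) + ∑ j ∈ Finset.range B, gt j p) :=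
        tsum_congr hpt
    _ = (∑' p, ∑ i ∈ Finset.range A, ft i p) + ∑' p, ∑ j ∈ Finset.range B, gt j p := by
        exact Summable.tsum_add (summable_sum hft_sum) (summable_sum hgt_sum)
    _ = (∑ i ∈ Finset.range A, ∑' p, ft i p) + ∑ j ∈ Finset.range B, ∑' p, gt j p := by
        rw [Summable.tsum_finsetSum hft_sum, Summable.tsum_finsetSum hgt_sum]
    _ = (∑ i ∈ Finset.range A, (Nat.choose (i + B - 1) (B - 1) : ℝ) * zeta2 (B + i) (A - i))
        + ∑ j ∈ Finset.range B, (Nat.choose (j + A - 1) (A - 1) : ℝ) * zeta2 (A + j) (B - j) := by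
        congr 1
        · apply Finset.sum_congr rfl
          intro i _
          rw [hft, tsum_mul_left, zetaAux1 (B + i) (A - i)]
          congr 2
        · apply Finset.sum_congr rfl
          intro j _
          rw [hgt, tsum_mul_left, zetaAux2 (A + j) (B - j)]
          congr 2
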